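/- Let u_1, u_2, u_3, u_4 be four vectors in R^3, every three of which are linearly independent. Then exactly one of the following holds: (Type 0) 0 is in the interior of the convex hull of {u_1,...,u_4}; (Type 1) one of the four vectors lies in the interior of the cone positively spanned by the other three; (Type 2) the positive cone spanned by the four vectors is pointed (contained in an open halfspace through the origin) and has all four vectors on extremal rays. -/

import Mathlib

/-- The cone positively spanned by the vectors `u i`, `i ∈ s`. -/
def posCone (u : Fin 4 → (Fin 3 → ℝ)) (s : Finset (Fin 4)) : Set (Fin 3 → ℝ) :=
  {x | ∃ α : Fin 4 → ℝ, (∀ j, 0 ≤ α j) ∧ (∀ j ∉ s, α j = 0) ∧ x = ∑ j, α j • u j}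

lemma mk_mem_posCone (u : Fin 4 → (Fin 3 → ℝ)) (i : Fin 4) (e : Fin 3 → Fin 4)
    (hei : ∀ k, e k ≠ i) (β : Fin 3 → ℝ) (hβ : ∀ k, 0 ≤ β k) {x : Fin 3 → ℝ}
    (hx : x = ∑ k, β k • u (e k)) :
    x ∈ posCone u (Finset.univ.erase i) := by
  classical
  refine ⟨fun j => ∑ k, if e k = j then β k else 0, ?_, ?_, ?_⟩
  · intro j
    refine Finset.sum_nonneg fun k _ => ?_
    split
    · exact hβ k
    · exact le_rfl
  · intro j hj
    have hji : j = i := by simpa using hj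
    subst hji
    exact Finset.sum_eq_zero fun k _ => if_neg (hei k)
  · rw [hx]
    have : ∀ j : Fin 4, (∑ k, if e k = j then β k else 0) • u j
        = ∑ k, (if e k = j then β k • u j else 0) := by
      intro j
      rw [Finset.sum_smul]
      exact Finset.sum_congr rfl fun k _ => by split <;> simp
    rw [Finset.sum_congr rfl fun j _ => this j, Finset.sum_comm]
    refine (Finset.sum_congr rfl fun k _ => ?_).symm
    rw [Finset.sum_ite_eq Finset.univ (e k) (fun j => β k • u j)]
    simp

lemma mem_interior_posCone (u : Fin 4 → (Fin 3 → ℝ)) (i : Fin 4) (e : Fin 3 → Fin 4)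
    (hei : ∀ k, e k ≠ i) (hli : LinearIndependent ℝ (u ∘ e)) (β : Fin 3 → ℝ)
    (hβ : ∀ k, 0 < β k) (hx : u i = ∑ k, β k • u (e k)) :
    u i ∈ interior (posCone u (Finset.univ.erase i)) := by
  have hcard : Fintype.card (Fin 3) = Module.finrank ℝ (Fin 3 → ℝ) := by simp
  let b := basisOfLinearIndependentOfCardEqFinrank hli hcard
  have hb : ∀ k, b k = u (e k) := fun k => by
    rw [show b = basisOfLinearIndependentOfCardEqFinrank hli hcard from rfl,
      coe_basisOfLinearIndependentOfCardEqFinrank]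
    rfl
  set U : Set (Fin 3 → ℝ) := {y | ∀ k, 0 < b.equivFun y k} with hU
  have hopen : IsOpen U := by
    have hUeq : U = ⋂ k, (fun y => b.equivFun y k) ⁻¹' Set.Ioi 0 := by
      ext y; simp [hU]
    rw [hUeq]
    exact isOpen_iInter_of_finite fun k =>
      isOpen_Ioi.preimage ((continuous_apply k).comp
        b.equivFun.toLinearMap.continuous_of_finiteDimensional)
  have hsub : U ⊆ posCone u (Finset.univ.erase i) := by
    intro y hy
    refine mk_mem_posCone u i e hei (fun k => b.equivFun y k) (fun k => (hy k).le) ?_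
    have h1 := b.equivFun.symm_apply_apply y
    rw [Module.Basis.equivFun_symm_apply] at h1
    conv_lhs => rw [← h1]
    exact Finset.sum_congr rfl fun k _ => by rw [hb]
  have hmem : u i ∈ U := by
    have h2 : b.equivFun (u i) = β := by
      have h3 : u i = b.equivFun.symm β := by
        rw [Module.Basis.equivFun_symm_apply, hx]
        exact Finset.sum_congr rfl fun k _ => by rw [hb]
      rw [h3, b.equivFun.apply_symm_apply]
    intro k; rw [h2]; exact hβ k
  exact interior_maximal hsub hopen hmem

lemma not_mem_posCone (u : Fin 4 → (Fin 3 → ℝ)) (i : Fin 4) (e : Fin 3 → Fin 4)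
    (hli : LinearIndependent ℝ (u ∘ e))
    (hsum : ∀ α : Fin 4 → ℝ, α i = 0 → ∑ j, α j • u j = ∑ k, α (e k) • u (e k))
    (γ : Fin 3 → ℝ) (k0 : Fin 3) (hγ : γ k0 < 0)
    (hx : u i = ∑ k, γ k • u (e k)) :
    u i ∉ posCone u (Finset.univ.erase i) := by
  rintro ⟨α, hα0, hαs, hαx⟩
  have hαi : α i = 0 := hαs i (by simp)
  rw [hsum α hαi] at hαx
  have hz : ∑ k, (α (e k) - γ k) • (u ∘ e) k = 0 := by
    simp only [sub_smul, Finset.sum_sub_distrib, Function.comp]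
    rw [← hαx, ← hx, sub_self]
  have hall := Fintype.linearIndependent_iff.mp hli _ hz
  have h1 := hall k0
  have h2 : α (e k0) = γ k0 := by linarith [sub_eq_zero.mp (by linarith [h1] : α (e k0) - γ k0 = 0)]
  exact absurd (hα0 (e k0)) (not_le.mpr (h2 ▸ hγ))

lemma exists_functional (v : Fin 3 → (Fin 3 → ℝ)) (hli : LinearIndependent ℝ v)
    (t : Fin 3 → ℝ) : ∃ f : Fin 3 → ℝ, ∀ k, ∑ s, f s * v k s = t k := by
  classical
  have hcard : Fintype.card (Fin 3) = Module.finrank ℝ (Fin 3 → ℝ) := by simp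
  let b := basisOfLinearIndependentOfCardEqFinrank hli hcard
  have hb : ∀ k, b k = v k := fun k => by
    rw [show b = basisOfLinearIndependentOfCardEqFinrank hli hcard from rfl,
      coe_basisOfLinearIndependentOfCardEqFinrank]
  refine ⟨fun s => ∑ k, t k * b.coord k (Pi.single s 1), fun k' => ?_⟩
  have hexp : ∀ (x : Fin 3 → ℝ), x = ∑ s : Fin 3, x s • (Pi.single s 1 : Fin 3 → ℝ) := by
    intro x
    funext m
    simp [Finset.sum_apply, Pi.single_apply]
  have key : ∀ k, ∑ s, v k' s * b.coord k (Pi.single s 1) = if k = k' then 1 else 0 := by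
    intro k
    have : (b.coord k) (v k') = ∑ s, v k' s * b.coord k (Pi.single s 1) := by
      conv_lhs => rw [hexp (v k')]
      rw [map_sum]
      exact Finset.sum_congr rfl fun s _ => by rw [map_smul]; simp [smul_eq_mul]
    rw [← this, ← hb, Module.Basis.coord_apply, Module.Basis.repr_self]
    simp [Finsupp.single_apply, eq_comm]
  calc ∑ s, (∑ k, t k * b.coord k (Pi.single s 1)) * v k' s
      = ∑ k, t k * ∑ s, v k' s * b.coord k (Pi.single s 1) := by
        rw [show (∑ s, (∑ k, t k * b.coord k (Pi.single s 1)) * v k' s)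
            = ∑ s, ∑ k, t k * b.coord k (Pi.single s 1) * v k' s from
          Finset.sum_congr rfl fun s _ => Finset.sum_mul ..,
          Finset.sum_comm]
        refine Finset.sum_congr rfl fun k _ => ?_
        rw [Finset.mul_sum]
        exact Finset.sum_congr rfl fun s _ => by ring
    _ = t k' := by
        rw [Finset.sum_congr rfl fun k _ => by rw [key k]]
        simp

set_option maxHeartbeats 2000000 in
theorem stmt_main (u : Fin 4 → (Fin 3 → ℝ))
    (hgen : ∀ s : Finset (Fin 4), s.card = 3 →
      LinearIndependent ℝ (fun i : s => u i)) :
    ((0 : Fin 3 → ℝ) ∈ interior (convexHull ℝ (Set.range u)) ∧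
        ¬(∃ i, u i ∈ interior (posCone u (Finset.univ.erase i))) ∧
        ¬((∃ f : Fin 3 → ℝ, ∀ i, 0 < ∑ t, f t * u i t) ∧
          ∀ i, u i ∉ posCone u (Finset.univ.erase i))) ∨
      (¬((0 : Fin 3 → ℝ) ∈ interior (convexHull ℝ (Set.range u))) ∧
        (∃ i, u i ∈ interior (posCone u (Finset.univ.erase i))) ∧
        ¬((∃ f : Fin 3 → ℝ, ∀ i, 0 < ∑ t, f t * u i t) ∧
          ∀ i, u i ∉ posCone u (Finset.univ.erase i))) ∨
      (¬((0 : Fin 3 → ℝ) ∈ interior (convexHull ℝ (Set.range u))) ∧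
        ¬(∃ i, u i ∈ interior (posCone u (Finset.univ.erase i))) ∧
        ((∃ f : Fin 3 → ℝ, ∀ i, 0 < ∑ t, f t * u i t) ∧
          ∀ i, u i ∉ posCone u (Finset.univ.erase i))) := by
  classical
  -- every three of the vectors are linearly independent
  have li : ∀ i j k : Fin 4, i ≠ j → i ≠ k → j ≠ k → LinearIndependent ℝ (u ∘ ![i, j, k]) := by
    intro i j k hij hik hjk
    have hcard : ({i, j, k} : Finset (Fin 4)).card = 3 := by
      rw [Finset.card_insert_of_notMem (by simp [hij, hik]),
        Finset.card_insert_of_notMem (by simp [hjk]), Finset.card_singleton]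
    have h := hgen _ hcard
    have hmem : ∀ m : Fin 3, ![i, j, k] m ∈ ({i, j, k} : Finset (Fin 4)) := by
      intro m; fin_cases m <;> simp
    have hinj : Function.Injective
        (fun m : Fin 3 => (⟨![i, j, k] m, hmem m⟩ : ({i, j, k} : Finset (Fin 4)))) := by
      intro m m' hmm'
      have : ![i, j, k] m = ![i, j, k] m' := congrArg Subtype.val hmm'
      fin_cases m <;> fin_cases m' <;> simp_all
    have := h.comp _ hinj
    convert this using 1
    rfl
  have li012 := li 0 1 2 (by decide) (by decide) (by decide)
  have li123 := li 1 2 3 (by decide) (by decide) (by decide)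
  have li023 := li 0 2 3 (by decide) (by decide) (by decide)
  have li013 := li 0 1 3 (by decide) (by decide) (by decide)
  have hcard : Fintype.card (Fin 3) = Module.finrank ℝ (Fin 3 → ℝ) := by simp
  set B := basisOfLinearIndependentOfCardEqFinrank li012 hcard with hB
  have hbvals : B 0 = u 0 ∧ B 1 = u 1 ∧ B 2 = u 2 := by
    rw [hB]
    refine ⟨?_, ?_, ?_⟩ <;>
      · rw [coe_basisOfLinearIndependentOfCardEqFinrank]; rfl
  set ca := B.equivFun (u 3) 0 with hca_def
  set cb := B.equivFun (u 3) 1 with hcb_def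
  set cc := B.equivFun (u 3) 2 with hcc_def
  have hu3 : u 3 = ca • u 0 + cb • u 1 + cc • u 2 := by
    have h1 := B.equivFun.symm_apply_apply (u 3)
    rw [Module.Basis.equivFun_symm_apply, Fin.sum_univ_three] at h1
    rw [← h1, hbvals.1, hbvals.2.1, hbvals.2.2]
  -- the coordinates do not vanish
  have hca : ca ≠ 0 := by
    intro h
    have := Fintype.linearIndependent_iff.mp li123 ![cb, cc, -1] ?_ 2
    · simp at this
    · rw [Fin.sum_univ_three]
      show cb • u 1 + cc • u 2 + (-1 : ℝ) • u 3 = 0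
      rw [hu3, h]; module
  have hcb : cb ≠ 0 := by
    intro h
    have := Fintype.linearIndependent_iff.mp li023 ![ca, cc, -1] ?_ 2
    · simp at this
    · rw [Fin.sum_univ_three]
      show ca • u 0 + cc • u 2 + (-1 : ℝ) • u 3 = 0
      rw [hu3, h]; module
  have hcc : cc ≠ 0 := by
    intro h
    have := Fintype.linearIndependent_iff.mp li013 ![ca, cb, -1] ?_ 2
    · simp at this
    · rw [Fin.sum_univ_three]
      show ca • u 0 + cb • u 1 + (-1 : ℝ) • u 3 = 0
      rw [hu3, h]; module
  -- reindexing identities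
  have hsum0 : ∀ α : Fin 4 → ℝ, α 0 = 0 →
      ∑ j, α j • u j = ∑ k, α (![1,2,3] k) • u (![1,2,3] k) := by
    intro α h; rw [Fin.sum_univ_four, Fin.sum_univ_three, h]
    show (0:ℝ) • u 0 + α 1 • u 1 + α 2 • u 2 + α 3 • u 3
      = α 1 • u 1 + α 2 • u 2 + α 3 • u 3
    rw [zero_smul, zero_add]
  have hsum1 : ∀ α : Fin 4 → ℝ, α 1 = 0 →
      ∑ j, α j • u j = ∑ k, α (![0,2,3] k) • u (![0,2,3] k) := by
    intro α h; rw [Fin.sum_univ_four, Fin.sum_univ_three, h]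
    show α 0 • u 0 + (0:ℝ) • u 1 + α 2 • u 2 + α 3 • u 3
      = α 0 • u 0 + α 2 • u 2 + α 3 • u 3
    rw [zero_smul, add_zero]
  have hsum2 : ∀ α : Fin 4 → ℝ, α 2 = 0 →
      ∑ j, α j • u j = ∑ k, α (![0,1,3] k) • u (![0,1,3] k) := by
    intro α h; rw [Fin.sum_univ_four, Fin.sum_univ_three, h]
    show α 0 • u 0 + α 1 • u 1 + (0:ℝ) • u 2 + α 3 • u 3
      = α 0 • u 0 + α 1 • u 1 + α 3 • u 3
    rw [zero_smul, add_zero]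
  have hsum3 : ∀ α : Fin 4 → ℝ, α 3 = 0 →
      ∑ j, α j • u j = ∑ k, α (![0,1,2] k) • u (![0,1,2] k) := by
    intro α h; rw [Fin.sum_univ_four, Fin.sum_univ_three, h]
    show α 0 • u 0 + α 1 • u 1 + α 2 • u 2 + (0:ℝ) • u 3
      = α 0 • u 0 + α 1 • u 1 + α 2 • u 2
    rw [zero_smul, add_zero]
  -- representations of each vector in terms of the other three
  have hu0s : u 0 = ∑ k, (![-cb/ca, -cc/ca, 1/ca]) k • u (![1,2,3] k) := by
    rw [Fin.sum_univ_three]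
    show u 0 = (-cb/ca) • u 1 + (-cc/ca) • u 2 + (1/ca) • u 3
    rw [hu3]; match_scalars <;> field_simp <;> ring
  have hu1s : u 1 = ∑ k, (![-ca/cb, -cc/cb, 1/cb]) k • u (![0,2,3] k) := by
    rw [Fin.sum_univ_three]
    show u 1 = (-ca/cb) • u 0 + (-cc/cb) • u 2 + (1/cb) • u 3
    rw [hu3]; match_scalars <;> field_simp <;> ring
  have hu2s : u 2 = ∑ k, (![-ca/cc, -cb/cc, 1/cc]) k • u (![0,1,3] k) := by
    rw [Fin.sum_univ_three]
    show u 2 = (-ca/cc) • u 0 + (-cb/cc) • u 1 + (1/cc) • u 3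
    rw [hu3]; match_scalars <;> field_simp <;> ring
  have hu3s : u 3 = ∑ k, (![ca, cb, cc]) k • u (![0,1,2] k) := by
    rw [Fin.sum_univ_three]
    show u 3 = ca • u 0 + cb • u 1 + cc • u 2
    exact hu3
  -- evaluating a functional on u 3
  have hsum3f : ∀ f : Fin 3 → ℝ, ∑ s, f s * u 3 s
      = ca * (∑ s, f s * u 0 s) + cb * (∑ s, f s * u 1 s) + cc * (∑ s, f s * u 2 s) := by
    intro f
    rw [Finset.mul_sum, Finset.mul_sum, Finset.mul_sum,
      ← Finset.sum_add_distrib, ← Finset.sum_add_distrib]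
    refine Finset.sum_congr rfl fun s _ => ?_
    rw [hu3]
    simp only [Pi.add_apply, Pi.smul_apply, smul_eq_mul]
    ring
  -- from positive a functional to not T0
  have notT0of : ∀ f : Fin 3 → ℝ, (∀ i, 0 < ∑ s, f s * u i s) →
      (0 : Fin 3 → ℝ) ∉ interior (convexHull ℝ (Set.range u)) := by
    intro f hf h0
    have hlin : IsLinearMap ℝ (fun x : Fin 3 → ℝ => ∑ s, f s * x s) := by
      constructor
      · intro x y; simp [mul_add, Finset.sum_add_distrib]
      · intro c x
        simp only [Pi.smul_apply, smul_eq_mul, Finset.mul_sum]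
        exact Finset.sum_congr rfl fun s _ => by ring
    have hconv : Convex ℝ {x : Fin 3 → ℝ | 0 < ∑ s, f s * x s} :=
      convex_halfSpace_gt hlin 0
    have hsubset : convexHull ℝ (Set.range u) ⊆ {x : Fin 3 → ℝ | 0 < ∑ s, f s * x s} := by
      refine convexHull_min ?_ hconv
      rintro x ⟨i, rfl⟩
      exact hf i
    have : (0:ℝ) < ∑ s, f s * (0 : Fin 3 → ℝ) s := hsubset (interior_subset h0)
    simp at this
  -- building a positive functional
  have mkf : ∀ t0 t1 t2 : ℝ, 0 < t0 → 0 < t1 → 0 < t2 → 0 < ca*t0 + cb*t1 + cc*t2 →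
      ∃ f : Fin 3 → ℝ, ∀ i, 0 < ∑ s, f s * u i s := by
    intro t0 t1 t2 ht0 ht1 ht2 ht3
    obtain ⟨f, hf⟩ := exists_functional (u ∘ ![0,1,2]) li012 ![t0, t1, t2]
    have hf0 : ∑ s, f s * u 0 s = t0 := hf 0
    have hf1 : ∑ s, f s * u 1 s = t1 := hf 1
    have hf2 : ∑ s, f s * u 2 s = t2 := hf 2
    have hf3 : ∑ s, f s * u 3 s = ca*t0 + cb*t1 + cc*t2 := by
      rw [hsum3f f, hf0, hf1, hf2]
    refine ⟨f, fun i => ?_⟩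
    fin_cases i
    · exact hf0 ▸ ht0
    · exact hf1 ▸ ht1
    · exact hf2 ▸ ht2
    · exact hf3 ▸ ht3
  -- case analysis on signs of coordinates
  rcases hca.lt_or_gt with hcaN | hcaP <;> rcases hcb.lt_or_gt with hcbN | hcbP <;>
    rcases hcc.lt_or_gt with hccN | hccP
  -- case (-,-,-) : Type 0
  · left
    have hs : ca + cb + cc - 1 < 0 := by linarith
    have hsne : ca + cb + cc - 1 ≠ 0 := ne_of_lt hs
    -- the key uniqueness property
    have key : ∀ w : Fin 4 → ℝ, (∑ j, w j) = 0 → (∑ j, w j • u j) = 0 → ∀ j, w j = 0 := by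
      intro w hw1 hw2
      rw [Fin.sum_univ_four] at hw1 hw2
      have hcomb : ∑ k, (![w 0 + w 3 * ca, w 1 + w 3 * cb, w 2 + w 3 * cc]) k
          • (u ∘ ![0,1,2]) k = 0 := by
        rw [Fin.sum_univ_three]
        show (w 0 + w 3 * ca) • u 0 + (w 1 + w 3 * cb) • u 1 + (w 2 + w 3 * cc) • u 2 = 0
        rw [hu3] at hw2
        rw [← hw2]; module
      have hz := Fintype.linearIndependent_iff.mp li012 _ hcomb
      have h0 : w 0 + w 3 * ca = 0 := hz 0
      have h1 : w 1 + w 3 * cb = 0 := hz 1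
      have h2 : w 2 + w 3 * cc = 0 := hz 2
      have h3 : w 3 = 0 := by
        have hmul : w 3 * (ca + cb + cc - 1) = 0 := by linarith
        rcases mul_eq_zero.mp hmul with h | h
        · exact h
        · exact absurd h hsne
      intro j; fin_cases j
      · show w 0 = 0; rw [h3] at h0; linarith
      · show w 1 = 0; rw [h3] at h1; linarith
      · show w 2 = 0; rw [h3] at h2; linarith
      · exact h3
    have haff : AffineIndependent ℝ u := by
      rw [affineIndependent_iff]
      intro s w hw0 hwsum
      have h := key (fun j => if j ∈ s then w j else 0) ?_ ?_
      · intro e he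
        have := h e
        simpa [he] using this
      · simp only [Finset.sum_ite_mem, Finset.univ_inter]
        exact hw0
      · have : ∀ j : Fin 4, (if j ∈ s then w j else 0) • u j
            = if j ∈ s then w j • u j else 0 := by
          intro j; split <;> simp
        rw [Finset.sum_congr rfl fun j _ => this j]
        simp only [Finset.sum_ite_mem, Finset.univ_inter]
        exact hwsum
    have htot : affineSpan ℝ (Set.range u) = ⊤ :=
      haff.affineSpan_eq_top_iff_card_eq_finrank_add_one.mpr (by simp)
    let AB : AffineBasis (Fin 4) ℝ (Fin 3 → ℝ) := ⟨u, haff, htot⟩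
    have hABcoe : ⇑AB = u := rfl
    set lam : Fin 4 → ℝ := ![ca/(ca+cb+cc-1), cb/(ca+cb+cc-1), cc/(ca+cb+cc-1),
      (-1)/(ca+cb+cc-1)] with hlam
    have hlam1 : ∑ j, lam j = 1 := by
      rw [Fin.sum_univ_four]
      show ca/(ca+cb+cc-1) + cb/(ca+cb+cc-1) + cc/(ca+cb+cc-1) + (-1)/(ca+cb+cc-1) = 1
      field_simp
      ring
    have hlam0 : ∑ j, lam j • u j = 0 := by
      rw [Fin.sum_univ_four]
      show (ca/(ca+cb+cc-1)) • u 0 + (cb/(ca+cb+cc-1)) • u 1 + (cc/(ca+cb+cc-1)) • u 2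
        + ((-1)/(ca+cb+cc-1)) • u 3 = 0
      rw [hu3]; match_scalars <;> field_simp <;> ring
    have hlampos : ∀ j, 0 < lam j := by
      intro j; fin_cases j
      · exact div_pos_iff.mpr (Or.inr ⟨hcaN, hs⟩)
      · exact div_pos_iff.mpr (Or.inr ⟨hcbN, hs⟩)
      · exact div_pos_iff.mpr (Or.inr ⟨hccN, hs⟩)
      · exact div_pos_iff.mpr (Or.inr ⟨by norm_num, hs⟩)
    have hT0 : (0 : Fin 3 → ℝ) ∈ interior (convexHull ℝ (Set.range u)) := by
      have hint := AB.interior_convexHull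
      rw [hABcoe] at hint
      rw [hint]
      intro j
      have hcomb : (Finset.univ.affineCombination ℝ u lam) = (0 : Fin 3 → ℝ) := by
        rw [Finset.affineCombination_eq_linear_combination _ _ _ hlam1]
        exact hlam0
      have hco := AB.coord_apply_combination_of_mem (Finset.mem_univ j) hlam1
      rw [hABcoe] at hco
      rw [← hcomb, hco]
      exact hlampos j
    have hnc : ∀ i, u i ∉ posCone u (Finset.univ.erase i) := by
      intro i; fin_cases i
      · exact not_mem_posCone u 0 ![1,2,3] li123 hsum0 ![-cb/ca, -cc/ca, 1/ca] 2
          (show (1:ℝ)/ca < 0 from one_div_neg.mpr hcaN) hu0s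
      · exact not_mem_posCone u 1 ![0,2,3] li023 hsum1 ![-ca/cb, -cc/cb, 1/cb] 2
          (show (1:ℝ)/cb < 0 from one_div_neg.mpr hcbN) hu1s
      · exact not_mem_posCone u 2 ![0,1,3] li013 hsum2 ![-ca/cc, -cb/cc, 1/cc] 2
          (show (1:ℝ)/cc < 0 from one_div_neg.mpr hccN) hu2s
      · exact not_mem_posCone u 3 ![0,1,2] li012 hsum3 ![ca, cb, cc] 0
          (show ca < 0 from hcaN) hu3s
    refine ⟨hT0, ?_, ?_⟩
    · rintro ⟨i, hi⟩
      exact hnc i (interior_subset hi)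
    · rintro ⟨⟨f, hf⟩, -⟩
      have h3 := hsum3f f
      nlinarith [hf 0, hf 1, hf 2, hf 3, mul_pos_of_neg_of_neg hcaN (neg_neg_iff_pos.mpr (hf 0)),
        mul_neg_of_neg_of_pos hcaN (hf 0), mul_neg_of_neg_of_pos hcbN (hf 1),
        mul_neg_of_neg_of_pos hccN (hf 2)]
  -- case (-,-,+) : Type 1 with i = 2
  · right; left
    have hβ : ∀ k, 0 < (![-ca/cc, -cb/cc, 1/cc]) k := by
      intro k; fin_cases k
      · show (0:ℝ) < -ca/cc; exact div_pos (by linarith) hccP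
      · show (0:ℝ) < -cb/cc; exact div_pos (by linarith) hccP
      · show (0:ℝ) < 1/cc; exact div_pos one_pos hccP
    have hT1mem := mem_interior_posCone u 2 ![0,1,3] (by decide) li013 _ hβ hu2s
    obtain ⟨f, hf⟩ := mkf 1 1 ((2 - ca - cb)/cc) one_pos one_pos (div_pos (by linarith) hccP)
      (by rw [mul_div_cancel₀ _ hcc]; ring_nf; norm_num)
    refine ⟨notT0of f hf, ⟨2, hT1mem⟩, ?_⟩
    rintro ⟨-, hnc⟩
    exact hnc 2 (interior_subset hT1mem)
  -- case (-,+,-) : Type 1 with i = 1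
  · right; left
    have hβ : ∀ k, 0 < (![-ca/cb, -cc/cb, 1/cb]) k := by
      intro k; fin_cases k
      · show (0:ℝ) < -ca/cb; exact div_pos (by linarith) hcbP
      · show (0:ℝ) < -cc/cb; exact div_pos (by linarith) hcbP
      · show (0:ℝ) < 1/cb; exact div_pos one_pos hcbP
    have hT1mem := mem_interior_posCone u 1 ![0,2,3] (by decide) li023 _ hβ hu1s
    obtain ⟨f, hf⟩ := mkf 1 ((2 - ca - cc)/cb) 1 one_pos (div_pos (by linarith) hcbP) one_pos
      (by rw [mul_div_cancel₀ _ hcb]; ring_nf; norm_num)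
    refine ⟨notT0of f hf, ⟨1, hT1mem⟩, ?_⟩
    rintro ⟨-, hnc⟩
    exact hnc 1 (interior_subset hT1mem)
  -- case (-,+,+) : Type 2
  · right; right
    obtain ⟨f, hf⟩ := mkf cb (-ca) 1 hcbP (by linarith) one_pos (by nlinarith)
    have hnc : ∀ i, u i ∉ posCone u (Finset.univ.erase i) := by
      intro i; fin_cases i
      · exact not_mem_posCone u 0 ![1,2,3] li123 hsum0 ![-cb/ca, -cc/ca, 1/ca] 2
          (show (1:ℝ)/ca < 0 from one_div_neg.mpr hcaN) hu0s
      · exact not_mem_posCone u 1 ![0,2,3] li023 hsum1 ![-ca/cb, -cc/cb, 1/cb] 1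
          (show -cc/cb < 0 from div_neg_of_neg_of_pos (by linarith) hcbP) hu1s
      · exact not_mem_posCone u 2 ![0,1,3] li013 hsum2 ![-ca/cc, -cb/cc, 1/cc] 1
          (show -cb/cc < 0 from div_neg_of_neg_of_pos (by linarith) hccP) hu2s
      · exact not_mem_posCone u 3 ![0,1,2] li012 hsum3 ![ca, cb, cc] 0
          (show ca < 0 from hcaN) hu3s
    refine ⟨notT0of f hf, ?_, ⟨f, hf⟩, hnc⟩
    rintro ⟨i, hi⟩
    exact hnc i (interior_subset hi)
  -- case (+,-,-) : Type 1 with i = 0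
  · right; left
    have hβ : ∀ k, 0 < (![-cb/ca, -cc/ca, 1/ca]) k := by
      intro k; fin_cases k
      · show (0:ℝ) < -cb/ca; exact div_pos (by linarith) hcaP
      · show (0:ℝ) < -cc/ca; exact div_pos (by linarith) hcaP
      · show (0:ℝ) < 1/ca; exact div_pos one_pos hcaP
    have hT1mem := mem_interior_posCone u 0 ![1,2,3] (by decide) li123 _ hβ hu0s
    obtain ⟨f, hf⟩ := mkf ((2 - cb - cc)/ca) 1 1 (div_pos (by linarith) hcaP) one_pos one_pos
      (by rw [mul_div_cancel₀ _ hca]; ring_nf; norm_num)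
    refine ⟨notT0of f hf, ⟨0, hT1mem⟩, ?_⟩
    rintro ⟨-, hnc⟩
    exact hnc 0 (interior_subset hT1mem)
  -- case (+,-,+) : Type 2
  · right; right
    obtain ⟨f, hf⟩ := mkf (-cb) ca 1 (by linarith) hcaP one_pos (by nlinarith)
    have hnc : ∀ i, u i ∉ posCone u (Finset.univ.erase i) := by
      intro i; fin_cases i
      · exact not_mem_posCone u 0 ![1,2,3] li123 hsum0 ![-cb/ca, -cc/ca, 1/ca] 1
          (show -cc/ca < 0 from div_neg_of_neg_of_pos (by linarith) hcaP) hu0s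
      · exact not_mem_posCone u 1 ![0,2,3] li023 hsum1 ![-ca/cb, -cc/cb, 1/cb] 2
          (show (1:ℝ)/cb < 0 from one_div_neg.mpr hcbN) hu1s
      · exact not_mem_posCone u 2 ![0,1,3] li013 hsum2 ![-ca/cc, -cb/cc, 1/cc] 0
          (show -ca/cc < 0 from div_neg_of_neg_of_pos (by linarith) hccP) hu2s
      · exact not_mem_posCone u 3 ![0,1,2] li012 hsum3 ![ca, cb, cc] 1
          (show cb < 0 from hcbN) hu3s
    refine ⟨notT0of f hf, ?_, ⟨f, hf⟩, hnc⟩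
    rintro ⟨i, hi⟩
    exact hnc i (interior_subset hi)
  -- case (+,+,-) : Type 2
  · right; right
    obtain ⟨f, hf⟩ := mkf (-cc) 1 ca (by linarith) one_pos hcaP (by nlinarith)
    have hnc : ∀ i, u i ∉ posCone u (Finset.univ.erase i) := by
      intro i; fin_cases i
      · exact not_mem_posCone u 0 ![1,2,3] li123 hsum0 ![-cb/ca, -cc/ca, 1/ca] 0
          (show -cb/ca < 0 from div_neg_of_neg_of_pos (by linarith) hcaP) hu0s
      · exact not_mem_posCone u 1 ![0,2,3] li023 hsum1 ![-ca/cb, -cc/cb, 1/cb] 0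
          (show -ca/cb < 0 from div_neg_of_neg_of_pos (by linarith) hcbP) hu1s
      · exact not_mem_posCone u 2 ![0,1,3] li013 hsum2 ![-ca/cc, -cb/cc, 1/cc] 2
          (show (1:ℝ)/cc < 0 from one_div_neg.mpr hccN) hu2s
      · exact not_mem_posCone u 3 ![0,1,2] li012 hsum3 ![ca, cb, cc] 2
          (show cc < 0 from hccN) hu3s
    refine ⟨notT0of f hf, ?_, ⟨f, hf⟩, hnc⟩
    rintro ⟨i, hi⟩
    exact hnc i (interior_subset hi)
  -- case (+,+,+) : Type 1 with i = 3
  · right; left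
    have hβ : ∀ k, 0 < (![ca, cb, cc]) k := by
      intro k; fin_cases k
      · exact hcaP
      · exact hcbP
      · exact hccP
    have hT1mem := mem_interior_posCone u 3 ![0,1,2] (by decide) li012 _ hβ hu3s
    obtain ⟨f, hf⟩ := mkf 1 1 1 one_pos one_pos one_pos (by nlinarith)
    refine ⟨notT0of f hf, ⟨3, hT1mem⟩, ?_⟩
    rintro ⟨-, hnc⟩
    exact hnc 3 (interior_subset hT1mem)

theorem stmt_7 (u : Fin 4 → (Fin 3 → ℝ))
    (hgen : ∀ s : Finset (Fin 4), s.card = 3 →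
      LinearIndependent ℝ (fun i : s => u i)) :
    let T0 : Prop := (0 : Fin 3 → ℝ) ∈ interior (convexHull ℝ (Set.range u))
    let T1 : Prop := ∃ i, u i ∈ interior (posCone u (Finset.univ.erase i))
    let T2 : Prop := (∃ f : Fin 3 → ℝ, ∀ i, 0 < ∑ t, f t * u i t) ∧
      ∀ i, u i ∉ posCone u (Finset.univ.erase i)
    (T0 ∧ ¬T1 ∧ ¬T2) ∨ (¬T0 ∧ T1 ∧ ¬T2) ∨ (¬T0 ∧ ¬T1 ∧ T2) := by
  intro T0 T1 T2
  exact stmt_main u hgen
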